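/- arXiv:2201.01224 — 2 statements merged into one kernel-verified Lean document; each statement's English description precedes it below -/
import Mathlib

section
/- For every n ≥ 4, the least eigenvalue of the adjacency matrix of the n-Queens' graph Q(n) equals -4. -/
open Finset

/-- Two squares attack each other: same row, column, diagonal or antidiagonal. -/
abbrev queensRel (n : ℕ) (a b : Fin n × Fin n) : Prop :=
  a.1 = b.1 ∨ a.2 = b.2 ∨ (a.1 : ℤ) - (a.2 : ℤ) = (b.1 : ℤ) - (b.2 : ℤ) ∨
    (a.1 : ℤ) + (a.2 : ℤ) = (b.1 : ℤ) + (b.2 : ℤ)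

/-- The n-Queens' graph. -/
def queensGraph (n : ℕ) : SimpleGraph (Fin n × Fin n) := SimpleGraph.fromRel (queensRel n)

instance (n : ℕ) : DecidableRel (queensGraph n).Adj := fun a b =>
  decidable_of_iff (a ≠ b ∧ (queensRel n a b ∨ queensRel n b a)) Iff.rfl

def IsAdjEigenvalue {V : Type*} [Fintype V] [DecidableEq V] (G : SimpleGraph V)
    [DecidableRel G.Adj] (μ : ℝ) : Prop :=
  ∃ X : V → ℝ, X ≠ 0 ∧ (G.adjMatrix ℝ).mulVec X = μ • X

/-- The 4×4 pattern X₄ (0-indexed). -/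
def X4 : Fin 4 × Fin 4 → ℝ := fun p =>
  if (p.1 = 0 ∧ p.2 = 1) ∨ (p.1 = 1 ∧ p.2 = 3) ∨ (p.1 = 2 ∧ p.2 = 0) ∨ (p.1 = 3 ∧ p.2 = 2)
  then 1
  else if (p.1 = 0 ∧ p.2 = 2) ∨ (p.1 = 1 ∧ p.2 = 0) ∨ (p.1 = 2 ∧ p.2 = 3) ∨ (p.1 = 3 ∧ p.2 = 1)
  then -1 else 0

/-- The translate of `X4` with (0-indexed) upper-left corner `(a,b)`, zero elsewhere. -/
def Xab (n a b : ℕ) : Fin n × Fin n → ℝ := fun p =>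
  if h : a ≤ (p.1 : ℕ) ∧ (p.1 : ℕ) ≤ a + 3 ∧ b ≤ (p.2 : ℕ) ∧ (p.2 : ℕ) ≤ b + 3 then
    X4 (⟨(p.1 : ℕ) - a, by omega⟩, ⟨(p.2 : ℕ) - b, by omega⟩)
  else 0


lemma queensRel_symm (n : ℕ) (p q : Fin n × Fin n) (h : queensRel n q p) : queensRel n p q := by
  rcases h with h|h|h|h
  · exact Or.inl h.symm
  · exact Or.inr (Or.inl h.symm)
  · exact Or.inr (Or.inr (Or.inl h.symm))
  · exact Or.inr (Or.inr (Or.inr h.symm))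

lemma queens_adj_iff (n : ℕ) (p q : Fin n × Fin n) :
    (queensGraph n).Adj p q ↔ p ≠ q ∧ queensRel n p q := by
  constructor
  · rintro ⟨hne, h | h⟩
    · exact ⟨hne, h⟩
    · exact ⟨hne, queensRel_symm n p q h⟩
  · rintro ⟨hne, h⟩
    exact ⟨hne, Or.inl h⟩

lemma key (n : ℕ) (p q : Fin n × Fin n) :
    ((queensGraph n).adjMatrix ℝ) p q =
      (if (p.1 : ℕ) = q.1 then 1 else 0) + (if (p.2 : ℕ) = q.2 then 1 else 0)
      + (if (p.1 : ℤ) - (p.2 : ℤ) = (q.1 : ℤ) - (q.2 : ℤ) then 1 else 0)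
      + (if (p.1 : ℤ) + (p.2 : ℤ) = (q.1 : ℤ) + (q.2 : ℤ) then 1 else 0)
      - (if p = q then 4 else 0) := by
  obtain ⟨⟨a, ha⟩, ⟨b, hb⟩⟩ := p
  obtain ⟨⟨c, hc⟩, ⟨d, hd⟩⟩ := q
  simp only [SimpleGraph.adjMatrix_apply, queens_adj_iff]
  simp only [queensRel, Prod.mk.injEq, Fin.mk.injEq, ne_eq, Prod.ext_iff, Fin.ext_iff]
  by_cases h1 : a = c <;> by_cases h2 : b = d <;>
    by_cases h3 : (a : ℤ) - b = (c : ℤ) - d <;> by_cases h4 : (a : ℤ) + b = (c : ℤ) + d <;>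
    simp only [h1, h2, h3, h4, if_true, if_false, Fin.val_natCast] <;>
    simp_all <;> first | omega | norm_num

lemma sum_corner (n : ℕ) (hn : 4 ≤ n) (F : ℕ → ℕ → ℝ) :
    ∑ q : Fin n × Fin n, F q.1 q.2 * Xab n 0 0 q
      = ∑ r : Fin 4 × Fin 4, F r.1 r.2 * X4 r := by
  have hz : ∀ q ∈ (Finset.univ : Finset (Fin n × Fin n)),
      q ∉ Finset.univ.filter (fun q : Fin n × Fin n => (q.1 : ℕ) ≤ 3 ∧ (q.2 : ℕ) ≤ 3) →
      F q.1 q.2 * Xab n 0 0 q = 0 := by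
    intro q _ hq
    simp only [Finset.mem_filter, Finset.mem_univ, true_and, not_and_or] at hq
    have : Xab n 0 0 q = 0 := by
      simp only [Xab]; rw [dif_neg (by omega)]
    rw [this, mul_zero]
  rw [← Finset.sum_subset (Finset.filter_subset _ _) hz]
  refine Finset.sum_nbij' (i := fun q : Fin n × Fin n =>
      ((⟨(q.1 : ℕ) % 4, Nat.mod_lt _ (by norm_num)⟩ : Fin 4),
       (⟨(q.2 : ℕ) % 4, Nat.mod_lt _ (by norm_num)⟩ : Fin 4)))
      (j := fun r : Fin 4 × Fin 4 => ((Fin.castLE hn r.1, Fin.castLE hn r.2)))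
      ?_ ?_ ?_ ?_ ?_
  · intro a _
    exact Finset.mem_univ _
  · intro r _
    simp only [Finset.mem_filter, Finset.mem_univ, true_and, Fin.coe_castLE]
    omega
  · intro a ha
    simp only [Finset.mem_filter, Finset.mem_univ, true_and] at ha
    ext <;> simp <;> omega
  · intro r _
    ext <;> simp <;> omega
  · intro a ha
    simp only [Finset.mem_filter, Finset.mem_univ, true_and] at ha
    have h1 : (a.1 : ℕ) % 4 = (a.1 : ℕ) := Nat.mod_eq_of_lt (by omega)
    have h2 : (a.2 : ℕ) % 4 = (a.2 : ℕ) := Nat.mod_eq_of_lt (by omega)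
    simp only [Xab, h1, h2]
    rw [dif_pos (by omega)]
    congr 1

lemma c0 : ((0 : Fin 4) : ℕ) = 0 := rfl
lemma c1 : ((1 : Fin 4) : ℕ) = 1 := rfl
lemma c2 : ((2 : Fin 4) : ℕ) = 2 := rfl
lemma c3 : ((3 : Fin 4) : ℕ) = 3 := rfl

lemma row_line (c : ℕ) :
    ∑ r : Fin 4 × Fin 4, (if c = (r.1 : ℕ) then (1:ℝ) else 0) * X4 r = 0 := by
  simp only [Fintype.sum_prod_type, Fin.sum_univ_four]
  simp (config := { decide := true }) only [X4, if_true, if_false]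
  norm_num [c0, c1, c2, c3]
  try ring

lemma col_line (c : ℕ) :
    ∑ r : Fin 4 × Fin 4, (if c = (r.2 : ℕ) then (1:ℝ) else 0) * X4 r = 0 := by
  simp only [Fintype.sum_prod_type, Fin.sum_univ_four]
  simp (config := { decide := true }) only [X4, if_true, if_false]
  norm_num [c0, c1, c2, c3]
  try ring

lemma diag_line (k : ℤ) :
    ∑ r : Fin 4 × Fin 4, (if k = (r.1 : ℤ) - (r.2 : ℤ) then (1:ℝ) else 0) * X4 r = 0 := by
  simp only [Fintype.sum_prod_type, Fin.sum_univ_four]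
  simp (config := { decide := true }) only [X4, if_true, if_false]
  norm_num [c0, c1, c2, c3]
  try ring

lemma antidiag_line (k : ℤ) :
    ∑ r : Fin 4 × Fin 4, (if k = (r.1 : ℤ) + (r.2 : ℤ) then (1:ℝ) else 0) * X4 r = 0 := by
  simp only [Fintype.sum_prod_type, Fin.sum_univ_four]
  simp (config := { decide := true }) only [X4, if_true, if_false]
  norm_num [c0, c1, c2, c3]
  try ring

lemma fiber_nonneg {V ι : Type*} [Fintype V] [DecidableEq ι] (f : V → ι) (X : V → ℝ) :
    0 ≤ ∑ p : V, ∑ q : V, (if f p = f q then (1:ℝ) else 0) * (X p * X q) := by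
  classical
  set g : ι → ℝ := fun k => ∑ q ∈ Finset.univ.filter (fun q => f q = k), X q with hg
  have h1 : ∀ p : V, ∑ q : V, (if f p = f q then (1:ℝ) else 0) * (X p * X q) = X p * g (f p) := by
    intro p
    rw [hg]
    simp only
    rw [Finset.sum_filter, Finset.mul_sum]
    apply Finset.sum_congr rfl
    intro q _
    by_cases hpq : f p = f q
    · rw [if_pos hpq, if_pos hpq.symm, one_mul]
    · rw [if_neg hpq, if_neg (fun hh => hpq hh.symm), zero_mul, mul_zero]
  calc (0:ℝ) ≤ ∑ k ∈ Finset.univ.image f, g k ^ 2 :=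
        Finset.sum_nonneg fun _ _ => sq_nonneg _
    _ = ∑ k ∈ Finset.univ.image f, ∑ p ∈ Finset.univ.filter (fun p => f p = k), X p * g (f p) := by
        apply Finset.sum_congr rfl
        intro k hk
        have h2 : ∑ p ∈ Finset.univ.filter (fun p => f p = k), X p * g (f p)
             = ∑ p ∈ Finset.univ.filter (fun p => f p = k), X p * g k := by
          apply Finset.sum_congr rfl; intro p hp
          rw [(Finset.mem_filter.mp hp).2]
        rw [h2, ← Finset.sum_mul, sq]
    _ = ∑ p : V, X p * g (f p) :=
        Finset.sum_fiberwise_of_maps_to (fun x _ => Finset.mem_image_of_mem f (Finset.mem_univ x)) _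
    _ = ∑ p : V, ∑ q : V, (if f p = f q then (1:ℝ) else 0) * (X p * X q) :=
        Finset.sum_congr rfl fun p _ => (h1 p).symm

/-- the least eigenvalue of the n-Queens' graph equals `-4` for `n ≥ 4`. -/
theorem queens_least_eigenvalue (n : ℕ) (h : 4 ≤ n) :
    IsAdjEigenvalue (queensGraph n) (-4) ∧
      ∀ μ : ℝ, IsAdjEigenvalue (queensGraph n) μ → (-4 : ℝ) ≤ μ := by
  constructor
  · -- -4 is an eigenvalue, with eigenvector Xab n 0 0
    refine ⟨Xab n 0 0, ?_, ?_⟩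
    · intro h0
      have h1 := congrFun h0 ((⟨0, by omega⟩ : Fin n), (⟨1, by omega⟩ : Fin n))
      simp only [Xab, Pi.zero_apply] at h1
      rw [dif_pos (by simp)] at h1
      norm_num [X4] at h1
    · funext p
      have hlast : ∑ q : Fin n × Fin n, (if p = q then (4:ℝ) else 0) * Xab n 0 0 q
          = 4 * Xab n 0 0 p := by
        simp [ite_mul, Finset.sum_ite_eq]
      calc ((queensGraph n).adjMatrix ℝ).mulVec (Xab n 0 0) p
          = ∑ q : Fin n × Fin n, ((queensGraph n).adjMatrix ℝ) p q * Xab n 0 0 q := by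
            simp [Matrix.mulVec, dotProduct]
        _ = ∑ q : Fin n × Fin n,
              ((if (p.1 : ℕ) = (q.1 : ℕ) then (1:ℝ) else 0) * Xab n 0 0 q
              + (if (p.2 : ℕ) = (q.2 : ℕ) then (1:ℝ) else 0) * Xab n 0 0 q
              + (if (p.1 : ℤ) - (p.2 : ℤ) = (q.1 : ℤ) - (q.2 : ℤ) then (1:ℝ) else 0) * Xab n 0 0 q
              + (if (p.1 : ℤ) + (p.2 : ℤ) = (q.1 : ℤ) + (q.2 : ℤ) then (1:ℝ) else 0) * Xab n 0 0 q
              - (if p = q then (4:ℝ) else 0) * Xab n 0 0 q) :=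
            Finset.sum_congr rfl fun q _ => by rw [key]; ring
        _ = ∑ q : Fin n × Fin n, (if (p.1 : ℕ) = (q.1 : ℕ) then (1:ℝ) else 0) * Xab n 0 0 q
            + ∑ q : Fin n × Fin n, (if (p.2 : ℕ) = (q.2 : ℕ) then (1:ℝ) else 0) * Xab n 0 0 q
            + ∑ q : Fin n × Fin n, (if (p.1 : ℤ) - (p.2 : ℤ) = (q.1 : ℤ) - (q.2 : ℤ) then (1:ℝ) else 0) * Xab n 0 0 q
            + ∑ q : Fin n × Fin n, (if (p.1 : ℤ) + (p.2 : ℤ) = (q.1 : ℤ) + (q.2 : ℤ) then (1:ℝ) else 0) * Xab n 0 0 q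
            - ∑ q : Fin n × Fin n, (if p = q then (4:ℝ) else 0) * Xab n 0 0 q := by
            rw [Finset.sum_sub_distrib, Finset.sum_add_distrib, Finset.sum_add_distrib,
              Finset.sum_add_distrib]
        _ = 0 + 0 + 0 + 0 - 4 * Xab n 0 0 p := by
            have hrow : ∑ q : Fin n × Fin n, (if (p.1 : ℕ) = (q.1 : ℕ) then (1:ℝ) else 0) * Xab n 0 0 q = 0 :=
              (sum_corner n h (fun i _ => if (p.1 : ℕ) = i then (1:ℝ) else 0)).trans (row_line _)
            have hcol : ∑ q : Fin n × Fin n, (if (p.2 : ℕ) = (q.2 : ℕ) then (1:ℝ) else 0) * Xab n 0 0 q = 0 :=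
              (sum_corner n h (fun _ j => if (p.2 : ℕ) = j then (1:ℝ) else 0)).trans (col_line _)
            have hdia : ∑ q : Fin n × Fin n, (if (p.1 : ℤ) - (p.2 : ℤ) = (q.1 : ℤ) - (q.2 : ℤ) then (1:ℝ) else 0) * Xab n 0 0 q = 0 :=
              (sum_corner n h (fun i j => if (p.1 : ℤ) - (p.2 : ℤ) = (i : ℤ) - (j : ℤ) then (1:ℝ) else 0)).trans (diag_line _)
            have hant : ∑ q : Fin n × Fin n, (if (p.1 : ℤ) + (p.2 : ℤ) = (q.1 : ℤ) + (q.2 : ℤ) then (1:ℝ) else 0) * Xab n 0 0 q = 0 :=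
              (sum_corner n h (fun i j => if (p.1 : ℤ) + (p.2 : ℤ) = (i : ℤ) + (j : ℤ) then (1:ℝ) else 0)).trans (antidiag_line _)
            rw [hrow, hcol, hdia, hant, hlast]
        _ = ((-4 : ℝ) • Xab n 0 0) p := by simp; try ring
  · -- lower bound
    rintro μ ⟨X, hX0, hXe⟩
    have hS : 0 < ∑ p : Fin n × Fin n, X p ^ 2 := by
      obtain ⟨p, hp⟩ : ∃ p, X p ≠ 0 := by
        by_contra hc; push_neg at hc; exact hX0 (funext hc)
      exact Finset.sum_pos' (fun q _ => sq_nonneg _) ⟨p, Finset.mem_univ p, by positivity⟩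
    have hf1 := fiber_nonneg (fun p : Fin n × Fin n => (p.1 : ℕ)) X
    have hf2 := fiber_nonneg (fun p : Fin n × Fin n => (p.2 : ℕ)) X
    have hf3 := fiber_nonneg (fun p : Fin n × Fin n => (p.1 : ℤ) - (p.2 : ℤ)) X
    have hf4 := fiber_nonneg (fun p : Fin n × Fin n => (p.1 : ℤ) + (p.2 : ℤ)) X
    have hlast : ∑ p : Fin n × Fin n, ∑ q : Fin n × Fin n,
        (if p = q then (4:ℝ) else 0) * (X p * X q) = 4 * ∑ p : Fin n × Fin n, X p ^ 2 := by
      rw [Finset.mul_sum]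
      apply Finset.sum_congr rfl
      intro p _
      simp [ite_mul, Finset.sum_ite_eq]
      try ring
    have hQ : μ * ∑ p : Fin n × Fin n, X p ^ 2
        = ∑ p : Fin n × Fin n, ∑ q : Fin n × Fin n,
            ((queensGraph n).adjMatrix ℝ) p q * (X p * X q) := by
      calc μ * ∑ p : Fin n × Fin n, X p ^ 2
          = ∑ p : Fin n × Fin n, X p * ((μ • X) p) := by
            rw [Finset.mul_sum]; exact Finset.sum_congr rfl fun p _ => by simp; try ring
        _ = ∑ p : Fin n × Fin n, X p * (((queensGraph n).adjMatrix ℝ).mulVec X p) := by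
            rw [hXe]
        _ = ∑ p : Fin n × Fin n, ∑ q : Fin n × Fin n,
              ((queensGraph n).adjMatrix ℝ) p q * (X p * X q) := by
            apply Finset.sum_congr rfl
            intro p _
            simp only [Matrix.mulVec, dotProduct]
            rw [Finset.mul_sum]
            exact Finset.sum_congr rfl fun q _ => by ring
    have hdec : ∑ p : Fin n × Fin n, ∑ q : Fin n × Fin n,
        ((queensGraph n).adjMatrix ℝ) p q * (X p * X q)
        = (∑ p : Fin n × Fin n, ∑ q : Fin n × Fin n,
            (if (p.1 : ℕ) = (q.1 : ℕ) then (1:ℝ) else 0) * (X p * X q))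
          + (∑ p : Fin n × Fin n, ∑ q : Fin n × Fin n,
            (if (p.2 : ℕ) = (q.2 : ℕ) then (1:ℝ) else 0) * (X p * X q))
          + (∑ p : Fin n × Fin n, ∑ q : Fin n × Fin n,
            (if (p.1 : ℤ) - (p.2 : ℤ) = (q.1 : ℤ) - (q.2 : ℤ) then (1:ℝ) else 0) * (X p * X q))
          + (∑ p : Fin n × Fin n, ∑ q : Fin n × Fin n,
            (if (p.1 : ℤ) + (p.2 : ℤ) = (q.1 : ℤ) + (q.2 : ℤ) then (1:ℝ) else 0) * (X p * X q))
          - 4 * ∑ p : Fin n × Fin n, X p ^ 2 := by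
      rw [← hlast, ← Finset.sum_add_distrib, ← Finset.sum_add_distrib,
        ← Finset.sum_add_distrib, ← Finset.sum_sub_distrib]
      apply Finset.sum_congr rfl
      intro p _
      rw [← Finset.sum_add_distrib, ← Finset.sum_add_distrib,
        ← Finset.sum_add_distrib, ← Finset.sum_sub_distrib]
      exact Finset.sum_congr rfl fun q _ => by rw [key]; ring
    nlinarith [hS, hQ, hdec, hf1, hf2, hf3, hf4]
end

section
/- For every n ≥ 4, the multiplicity of the eigenvalue -4 of the n-Queens' graph Q(n) is exactly (n-3)^2. -/
open Finset

def LS4 (al be c : ℤ) : ℝ :=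
  ∑ q ∈ univ.filter (fun q : Fin 4 × Fin 4 => al*(q.1:ℤ) + be*(q.2:ℤ) = c), X4 q

lemma ls4_expand (al be c : ℤ) : LS4 al be c =
    ∑ q : Fin 4 × Fin 4, (if al*(q.1:ℤ) + be*(q.2:ℤ) = c then X4 q else 0) := by
  rw [LS4, Finset.sum_filter]

lemma LS4_row (c : ℤ) : LS4 1 0 c = 0 := by
  rw [ls4_expand, Fintype.sum_prod_type]
  simp [Fin.sum_univ_four, X4]

lemma LS4_col (c : ℤ) : LS4 0 1 c = 0 := by
  rw [ls4_expand, Fintype.sum_prod_type]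
  simp [Fin.sum_univ_four, X4]; split_ifs <;> ring
lemma LS4_diag (c : ℤ) : LS4 1 (-1) c = 0 := by
  rw [ls4_expand, Fintype.sum_prod_type]
  simp [Fin.sum_univ_four, X4]
  split_ifs <;> norm_num <;> omega

lemma LS4_anti (c : ℤ) : LS4 1 1 c = 0 := by
  rw [ls4_expand, Fintype.sum_prod_type]
  simp [Fin.sum_univ_four, X4]
  split_ifs <;> norm_num <;> omega

def LSb (n : ℕ) (X : Fin n × Fin n → ℝ) (al be c : ℤ) : ℝ :=
  ∑ p ∈ univ.filter (fun p : Fin n × Fin n => al*(p.1:ℤ) + be*(p.2:ℤ) = c), X p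

lemma LS_Xab (n a b : ℕ) (ha : a + 3 < n) (hb : b + 3 < n) (al be c : ℤ) :
    LSb n (Xab n a b) al be c = LS4 al be (c - al*a - be*b) := by
  rw [LSb, LS4]
  have h1 : ∑ p ∈ univ.filter (fun p : Fin n × Fin n => al*(p.1:ℤ) + be*(p.2:ℤ) = c),
      Xab n a b p
      = ∑ p ∈ univ.filter (fun p : Fin n × Fin n => (al*(p.1:ℤ) + be*(p.2:ℤ) = c) ∧
          (a ≤ (p.1:ℕ) ∧ (p.1:ℕ) ≤ a + 3 ∧ b ≤ (p.2:ℕ) ∧ (p.2:ℕ) ≤ b + 3)),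
        Xab n a b p := by
    apply (Finset.sum_subset ?_ ?_).symm
    · intro x hx; simp only [mem_filter, mem_univ, true_and] at *; exact hx.1
    · intro x hx hnx
      simp only [mem_filter, mem_univ, true_and] at hx hnx
      rw [Xab, dif_neg]; tauto
  rw [h1]
  apply Finset.sum_nbij' (i := fun p : Fin n × Fin n =>
      ((⟨((p.1:ℕ) - a) % 4, Nat.mod_lt _ (by norm_num)⟩ : Fin 4),
       (⟨((p.2:ℕ) - b) % 4, Nat.mod_lt _ (by norm_num)⟩ : Fin 4)))
    (j := fun q : Fin 4 × Fin 4 =>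
      ((⟨(q.1:ℕ) + a, by omega⟩ : Fin n), (⟨(q.2:ℕ) + b, by omega⟩ : Fin n)))
  · intro p hp
    simp only [mem_filter, mem_univ, true_and] at hp ⊢
    obtain ⟨hc, h2⟩ := hp
    have e1 : ((p.1:ℕ) - a) % 4 = (p.1:ℕ) - a := Nat.mod_eq_of_lt (by omega)
    have e2 : ((p.2:ℕ) - b) % 4 = (p.2:ℕ) - b := Nat.mod_eq_of_lt (by omega)
    simp only [e1, e2]
    have e3 : ((((p.1:ℕ) - a) : ℕ) : ℤ) = (p.1:ℤ) - (a:ℤ) := by omega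
    have e4 : ((((p.2:ℕ) - b) : ℕ) : ℤ) = (p.2:ℤ) - (b:ℤ) := by omega
    rw [e3, e4]; linear_combination hc
  · intro q hq
    simp only [mem_filter, mem_univ, true_and] at hq ⊢
    constructor
    · push_cast at hq ⊢; linear_combination hq
    · simp; omega
  · intro p hp
    simp only [mem_filter, mem_univ, true_and] at hp
    obtain ⟨hc, h2⟩ := hp
    have e1 : ((p.1:ℕ) - a) % 4 = (p.1:ℕ) - a := Nat.mod_eq_of_lt (by omega)
    have e2 : ((p.2:ℕ) - b) % 4 = (p.2:ℕ) - b := Nat.mod_eq_of_lt (by omega)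
    ext <;> simp [e1, e2] <;> omega
  · intro q hq
    ext <;> simp [Nat.add_sub_cancel]
  · intro p hp
    simp only [mem_filter, mem_univ, true_and] at hp
    obtain ⟨hc, h2⟩ := hp
    have e1 : ((p.1:ℕ) - a) % 4 = (p.1:ℕ) - a := Nat.mod_eq_of_lt (by omega)
    have e2 : ((p.2:ℕ) - b) % 4 = (p.2:ℕ) - b := Nat.mod_eq_of_lt (by omega)
    rw [Xab, dif_pos h2]
    simp [e1, e2]

lemma queensRel_iff (n : ℕ) (a b : Fin n × Fin n) : queensRel n a b ↔
    ((a.1:ℤ) = (b.1:ℤ) ∨ (a.2:ℤ) = (b.2:ℤ) ∨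
     (a.1:ℤ) - (a.2:ℤ) = (b.1:ℤ) - (b.2:ℤ) ∨ (a.1:ℤ) + (a.2:ℤ) = (b.1:ℤ) + (b.2:ℤ)) := by
  constructor
  · rintro (h|h|h|h)
    · exact Or.inl (by rw [h])
    · exact Or.inr (Or.inl (by rw [h]))
    · exact Or.inr (Or.inr (Or.inl h))
    · exact Or.inr (Or.inr (Or.inr h))
  · rintro (h|h|h|h)
    · exact Or.inl (Fin.ext (by exact_mod_cast h))
    · exact Or.inr (Or.inl (Fin.ext (by exact_mod_cast h)))
    · exact Or.inr (Or.inr (Or.inl h))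
    · exact Or.inr (Or.inr (Or.inr h))

lemma pointwise (n : ℕ) (X : Fin n × Fin n → ℝ) (p q : Fin n × Fin n) :
    (if (queensGraph n).Adj p q then (X q) else 0) + (if q = p then 4 * X q else 0)
    = (if 1*(q.1:ℤ) + 0*(q.2:ℤ) = (p.1:ℤ) then X q else 0)
      + (if 0*(q.1:ℤ) + 1*(q.2:ℤ) = (p.2:ℤ) then X q else 0)
      + (if 1*(q.1:ℤ) + (-1)*(q.2:ℤ) = (p.1:ℤ) - (p.2:ℤ) then X q else 0)
      + (if 1*(q.1:ℤ) + 1*(q.2:ℤ) = (p.1:ℤ) + (p.2:ℤ) then X q else 0) := by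
  by_cases hqp : q = p
  · subst hqp
    rw [if_neg (SimpleGraph.irrefl (queensGraph n)), if_pos rfl, if_pos (by ring), if_pos (by ring),
      if_pos (by ring), if_pos (by ring)]
    ring
  · rw [if_neg hqp, add_zero]
    have hne : ¬((q.1:ℤ) = (p.1:ℤ) ∧ (q.2:ℤ) = (p.2:ℤ)) := by
      rintro ⟨h1, h2⟩
      exact hqp (Prod.ext (Fin.ext (by exact_mod_cast h1)) (Fin.ext (by exact_mod_cast h2)))
    have hadj : (queensGraph n).Adj p q ↔
        ((q.1:ℤ) = (p.1:ℤ) ∨ (q.2:ℤ) = (p.2:ℤ) ∨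
         (q.1:ℤ) - (q.2:ℤ) = (p.1:ℤ) - (p.2:ℤ) ∨
         (q.1:ℤ) + (q.2:ℤ) = (p.1:ℤ) + (p.2:ℤ)) := by
      rw [queensGraph, SimpleGraph.fromRel_adj, queensRel_iff, queensRel_iff]
      constructor
      · rintro ⟨hne2, h⟩
        omega
      · intro h
        exact ⟨fun e => hqp e.symm, Or.inr (by omega)⟩
    have r1 : (1*(q.1:ℤ) + 0*(q.2:ℤ) = (p.1:ℤ)) ↔ ((q.1:ℤ) = (p.1:ℤ)) := by omega
    have r2 : (0*(q.1:ℤ) + 1*(q.2:ℤ) = (p.2:ℤ)) ↔ ((q.2:ℤ) = (p.2:ℤ)) := by omega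
    have r3 : (1*(q.1:ℤ) + (-1)*(q.2:ℤ) = (p.1:ℤ) - (p.2:ℤ)) ↔
        ((q.1:ℤ) - (q.2:ℤ) = (p.1:ℤ) - (p.2:ℤ)) := by omega
    have r4 : (1*(q.1:ℤ) + 1*(q.2:ℤ) = (p.1:ℤ) + (p.2:ℤ)) ↔
        ((q.1:ℤ) + (q.2:ℤ) = (p.1:ℤ) + (p.2:ℤ)) := by omega
    rw [if_congr r1 rfl rfl, if_congr r2 rfl rfl, if_congr r3 rfl rfl, if_congr r4 rfl rfl,
      if_congr hadj rfl rfl]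
    by_cases c1 : (q.1:ℤ) = (p.1:ℤ) <;> by_cases c2 : (q.2:ℤ) = (p.2:ℤ) <;>
      by_cases c3 : (q.1:ℤ) - (q.2:ℤ) = (p.1:ℤ) - (p.2:ℤ) <;>
      by_cases c4 : (q.1:ℤ) + (q.2:ℤ) = (p.1:ℤ) + (p.2:ℤ) <;>
      first
        | (exfalso; omega)
        | (simp only [c1, c2, c3, c4, if_true, if_false, if_pos, if_neg, not_false_iff,
            or_true, true_or, or_false, false_or, if_neg (by omega :
              ¬((q.1:ℤ) = (p.1:ℤ) ∨ (q.2:ℤ) = (p.2:ℤ) ∨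
                (q.1:ℤ) - (q.2:ℤ) = (p.1:ℤ) - (p.2:ℤ) ∨
                (q.1:ℤ) + (q.2:ℤ) = (p.1:ℤ) + (p.2:ℤ)))]
           <;> simp [c1, c2, c3, c4])
        | (simp [c1, c2, c3, c4])

lemma mulVec_eq (n : ℕ) (X : Fin n × Fin n → ℝ) (p : Fin n × Fin n) :
    ((queensGraph n).adjMatrix ℝ).mulVec X p + 4 * X p
    = LSb n X 1 0 (p.1:ℤ) + LSb n X 0 1 (p.2:ℤ)
      + LSb n X 1 (-1) ((p.1:ℤ) - (p.2:ℤ)) + LSb n X 1 1 ((p.1:ℤ) + (p.2:ℤ)) := by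
  have h0 : ((queensGraph n).adjMatrix ℝ).mulVec X p
      = ∑ q : Fin n × Fin n, (if (queensGraph n).Adj p q then X q else 0) := by
    rw [SimpleGraph.adjMatrix_mulVec_apply, SimpleGraph.neighborFinset_eq_filter,
      Finset.sum_filter]
  have h4 : 4 * X p = ∑ q : Fin n × Fin n, (if q = p then 4 * X q else 0) := by
    rw [Finset.sum_ite_eq' univ p (fun q => 4 * X q), if_pos (mem_univ p)]
  rw [h0, h4, ← Finset.sum_add_distrib]
  simp only [LSb, Finset.sum_filter]
  rw [← Finset.sum_add_distrib, ← Finset.sum_add_distrib, ← Finset.sum_add_distrib]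
  exact Finset.sum_congr rfl (fun q _ => pointwise n X p q)

lemma sum_mul_LSb (n : ℕ) (X : Fin n × Fin n → ℝ) (al be : ℤ) :
    ∑ p : Fin n × Fin n, X p * LSb n X al be (al*(p.1:ℤ) + be*(p.2:ℤ))
    = ∑ c ∈ univ.image (fun p : Fin n × Fin n => al*(p.1:ℤ) + be*(p.2:ℤ)),
        (LSb n X al be c)^2 := by
  rw [← Finset.sum_fiberwise_of_maps_to
    (fun p (_ : p ∈ univ) => Finset.mem_image_of_mem
      (fun p : Fin n × Fin n => al*(p.1:ℤ) + be*(p.2:ℤ)) (mem_univ p))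
    (fun p => X p * LSb n X al be (al*(p.1:ℤ) + be*(p.2:ℤ)))]
  apply Finset.sum_congr rfl
  intro c _
  have hcong : ∀ p ∈ univ.filter (fun p : Fin n × Fin n => al*(p.1:ℤ) + be*(p.2:ℤ) = c),
      X p * LSb n X al be (al*(p.1:ℤ) + be*(p.2:ℤ)) = X p * LSb n X al be c := by
    intro p hp
    rw [mem_filter] at hp
    rw [hp.2]
  rw [Finset.sum_congr rfl hcong, ← Finset.sum_mul]
  rw [show (∑ p ∈ univ.filter (fun p : Fin n × Fin n => al*(p.1:ℤ) + be*(p.2:ℤ) = c), X p)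
      = LSb n X al be c from rfl]
  ring

lemma LSb_out (n : ℕ) (X : Fin n × Fin n → ℝ) (al be c : ℤ)
    (hc : c ∉ univ.image (fun p : Fin n × Fin n => al*(p.1:ℤ) + be*(p.2:ℤ))) :
    LSb n X al be c = 0 := by
  rw [LSb, Finset.filter_false_of_mem, Finset.sum_empty]
  intro p _ hpc
  exact hc (Finset.mem_image.mpr ⟨p, mem_univ p, hpc⟩)

lemma eigen_iff (n : ℕ) (X : Fin n × Fin n → ℝ) :
    Matrix.toLin' ((queensGraph n).adjMatrix ℝ) X = (-4:ℝ) • X ↔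
    ((∀ c, LSb n X 1 0 c = 0) ∧ (∀ c, LSb n X 0 1 c = 0) ∧
     (∀ c, LSb n X 1 (-1) c = 0) ∧ (∀ c, LSb n X 1 1 c = 0)) := by
  rw [Matrix.toLin'_apply]
  constructor
  · intro hX
    have hp : ∀ p : Fin n × Fin n, LSb n X 1 0 (p.1:ℤ) + LSb n X 0 1 (p.2:ℤ)
        + LSb n X 1 (-1) ((p.1:ℤ) - (p.2:ℤ)) + LSb n X 1 1 ((p.1:ℤ) + (p.2:ℤ)) = 0 := by
      intro p
      have h1 := mulVec_eq n X p
      have h2 : ((queensGraph n).adjMatrix ℝ).mulVec X p = -4 * X p := by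
        rw [hX]; simp
      rw [h2] at h1
      linarith
    have key : ((∑ c ∈ univ.image (fun p : Fin n × Fin n => 1*(p.1:ℤ) + 0*(p.2:ℤ)),
          (LSb n X 1 0 c)^2)
        + (∑ c ∈ univ.image (fun p : Fin n × Fin n => 0*(p.1:ℤ) + 1*(p.2:ℤ)),
          (LSb n X 0 1 c)^2))
        + ((∑ c ∈ univ.image (fun p : Fin n × Fin n => 1*(p.1:ℤ) + (-1)*(p.2:ℤ)),
          (LSb n X 1 (-1) c)^2)
        + (∑ c ∈ univ.image (fun p : Fin n × Fin n => 1*(p.1:ℤ) + 1*(p.2:ℤ)),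
          (LSb n X 1 1 c)^2)) = 0 := by
      rw [← sum_mul_LSb, ← sum_mul_LSb, ← sum_mul_LSb, ← sum_mul_LSb,
        ← Finset.sum_add_distrib, ← Finset.sum_add_distrib, ← Finset.sum_add_distrib]
      apply Finset.sum_eq_zero
      intro p _
      have hsimp1 : 1*(p.1:ℤ) + 0*(p.2:ℤ) = (p.1:ℤ) := by ring
      have hsimp2 : 0*(p.1:ℤ) + 1*(p.2:ℤ) = (p.2:ℤ) := by ring
      have hsimp3 : 1*(p.1:ℤ) + (-1)*(p.2:ℤ) = (p.1:ℤ) - (p.2:ℤ) := by ring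
      have hsimp4 : 1*(p.1:ℤ) + 1*(p.2:ℤ) = (p.1:ℤ) + (p.2:ℤ) := by ring
      have hS : LSb n X 1 0 (p.1:ℤ) + LSb n X 0 1 (p.2:ℤ)
          + (LSb n X 1 (-1) ((p.1:ℤ) - (p.2:ℤ)) + LSb n X 1 1 ((p.1:ℤ) + (p.2:ℤ))) = 0 := by
        have := hp p; linarith
      rw [hsimp1, hsimp2, hsimp3, hsimp4, ← mul_add, ← mul_add, ← mul_add, hS, mul_zero]
    have hnn : ∀ (al be : ℤ) (s : Finset ℤ), (0:ℝ) ≤ ∑ c ∈ s, (LSb n X al be c)^2 :=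
      fun al be s => Finset.sum_nonneg (fun c _ => sq_nonneg _)
    have hz : ∀ (al be : ℤ) (s : Finset ℤ), (∑ c ∈ s, (LSb n X al be c)^2 = 0) →
        ∀ c ∈ s, LSb n X al be c = 0 := by
      intro al be s hs c hc
      have := (Finset.sum_eq_zero_iff_of_nonneg (fun c _ => sq_nonneg (LSb n X al be c))).mp
        hs c hc
      exact pow_eq_zero_iff (by norm_num) |>.mp this
    have e1 : ∑ c ∈ univ.image (fun p : Fin n × Fin n => 1*(p.1:ℤ) + 0*(p.2:ℤ)),
        (LSb n X 1 0 c)^2 = 0 := by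
      have := hnn 1 0 (univ.image (fun p : Fin n × Fin n => 1*(p.1:ℤ) + 0*(p.2:ℤ)))
      have := hnn 0 1 (univ.image (fun p : Fin n × Fin n => 0*(p.1:ℤ) + 1*(p.2:ℤ)))
      have := hnn 1 (-1) (univ.image (fun p : Fin n × Fin n => 1*(p.1:ℤ) + (-1)*(p.2:ℤ)))
      have := hnn 1 1 (univ.image (fun p : Fin n × Fin n => 1*(p.1:ℤ) + 1*(p.2:ℤ)))
      linarith
    have e2 : ∑ c ∈ univ.image (fun p : Fin n × Fin n => 0*(p.1:ℤ) + 1*(p.2:ℤ)),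
        (LSb n X 0 1 c)^2 = 0 := by
      have := hnn 1 0 (univ.image (fun p : Fin n × Fin n => 1*(p.1:ℤ) + 0*(p.2:ℤ)))
      have := hnn 0 1 (univ.image (fun p : Fin n × Fin n => 0*(p.1:ℤ) + 1*(p.2:ℤ)))
      have := hnn 1 (-1) (univ.image (fun p : Fin n × Fin n => 1*(p.1:ℤ) + (-1)*(p.2:ℤ)))
      have := hnn 1 1 (univ.image (fun p : Fin n × Fin n => 1*(p.1:ℤ) + 1*(p.2:ℤ)))
      linarith
    have e3 : ∑ c ∈ univ.image (fun p : Fin n × Fin n => 1*(p.1:ℤ) + (-1)*(p.2:ℤ)),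
        (LSb n X 1 (-1) c)^2 = 0 := by
      have := hnn 1 0 (univ.image (fun p : Fin n × Fin n => 1*(p.1:ℤ) + 0*(p.2:ℤ)))
      have := hnn 0 1 (univ.image (fun p : Fin n × Fin n => 0*(p.1:ℤ) + 1*(p.2:ℤ)))
      have := hnn 1 (-1) (univ.image (fun p : Fin n × Fin n => 1*(p.1:ℤ) + (-1)*(p.2:ℤ)))
      have := hnn 1 1 (univ.image (fun p : Fin n × Fin n => 1*(p.1:ℤ) + 1*(p.2:ℤ)))
      linarith
    have e4 : ∑ c ∈ univ.image (fun p : Fin n × Fin n => 1*(p.1:ℤ) + 1*(p.2:ℤ)),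
        (LSb n X 1 1 c)^2 = 0 := by
      have := hnn 1 0 (univ.image (fun p : Fin n × Fin n => 1*(p.1:ℤ) + 0*(p.2:ℤ)))
      have := hnn 0 1 (univ.image (fun p : Fin n × Fin n => 0*(p.1:ℤ) + 1*(p.2:ℤ)))
      have := hnn 1 (-1) (univ.image (fun p : Fin n × Fin n => 1*(p.1:ℤ) + (-1)*(p.2:ℤ)))
      have := hnn 1 1 (univ.image (fun p : Fin n × Fin n => 1*(p.1:ℤ) + 1*(p.2:ℤ)))
      linarith
    refine ⟨fun c => ?_, fun c => ?_, fun c => ?_, fun c => ?_⟩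
    · by_cases hc : c ∈ univ.image (fun p : Fin n × Fin n => 1*(p.1:ℤ) + 0*(p.2:ℤ))
      · exact hz 1 0 _ e1 c hc
      · exact LSb_out n X 1 0 c hc
    · by_cases hc : c ∈ univ.image (fun p : Fin n × Fin n => 0*(p.1:ℤ) + 1*(p.2:ℤ))
      · exact hz 0 1 _ e2 c hc
      · exact LSb_out n X 0 1 c hc
    · by_cases hc : c ∈ univ.image (fun p : Fin n × Fin n => 1*(p.1:ℤ) + (-1)*(p.2:ℤ))
      · exact hz 1 (-1) _ e3 c hc
      · exact LSb_out n X 1 (-1) c hc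
    · by_cases hc : c ∈ univ.image (fun p : Fin n × Fin n => 1*(p.1:ℤ) + 1*(p.2:ℤ))
      · exact hz 1 1 _ e4 c hc
      · exact LSb_out n X 1 1 c hc
  · rintro ⟨h1, h2, h3, h4⟩
    funext p
    have := mulVec_eq n X p
    rw [h1, h2, h3, h4] at this
    have : ((queensGraph n).adjMatrix ℝ).mulVec X p = -4 * X p := by linarith
    rw [this]
    simp

lemma fireN (n : ℕ) (X : Fin n × Fin n → ℝ) (al be c : ℤ)
    (hsum : LSb n X al be c = 0)
    (i j : ℕ) (hi : i < n) (hj : j < n) (hp : al*(i:ℤ) + be*(j:ℤ) = c)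
    (hother : ∀ iq jq : ℕ, ∀ hiq : iq < n, ∀ hjq : jq < n,
      al*(iq:ℤ) + be*(jq:ℤ) = c → ¬(iq = i ∧ jq = j) →
      X (⟨iq, hiq⟩, ⟨jq, hjq⟩) = 0) :
    X (⟨i, hi⟩, ⟨j, hj⟩) = 0 := by
  have hmem : ((⟨i, hi⟩, ⟨j, hj⟩) : Fin n × Fin n) ∈
      univ.filter (fun p : Fin n × Fin n => al*(p.1:ℤ) + be*(p.2:ℤ) = c) := by
    simp only [mem_filter, mem_univ, true_and]
    exact_mod_cast hp
  have hz : ∀ q ∈ univ.filter (fun p : Fin n × Fin n => al*(p.1:ℤ) + be*(p.2:ℤ) = c),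
      q ≠ (⟨i, hi⟩, ⟨j, hj⟩) → X q = 0 := by
    rintro ⟨⟨iq, hiq⟩, ⟨jq, hjq⟩⟩ hq hne
    simp only [mem_filter, mem_univ, true_and] at hq
    apply hother iq jq hiq hjq (by exact_mod_cast hq)
    intro ⟨e1, e2⟩
    exact hne (by subst e1; subst e2; rfl)
  exact (Finset.sum_eq_single_of_mem _ hmem hz).symm.trans hsum

lemma propagation (n : ℕ) (hn : 4 ≤ n) (X : Fin n × Fin n → ℝ)
    (h1 : ∀ c, LSb n X 1 0 c = 0) (h2 : ∀ c, LSb n X 0 1 c = 0)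
    (h3 : ∀ c, LSb n X 1 (-1) c = 0) (h4 : ∀ c, LSb n X 1 1 c = 0)
    (hS : ∀ i j : ℕ, ∀ hi : i < n, ∀ hj : j < n, i ≤ n-4 → 1 ≤ j → j ≤ n-3 →
      X (⟨i,hi⟩,⟨j,hj⟩) = 0) :
    X = 0 := by
  have congrX : ∀ (i j i' j' : ℕ) (hi : i < n) (hj : j < n) (hi' : i' < n) (hj' : j' < n),
      i = i' → j = j' → X (⟨i',hi'⟩,⟨j',hj'⟩) = 0 → X (⟨i,hi⟩,⟨j,hj⟩) = 0 := by
    intro i j i' j' hi hj hi' hj' e1 e2 h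
    subst e1; subst e2; exact h
  -- column 0, rows ≤ n-3
  have Zc0a : ∀ i : ℕ, ∀ hi : i < n, i ≤ n-3 → X (⟨i,hi⟩,⟨0, by omega⟩) = 0 := by
    intro i hi hile
    apply fireN n X 1 1 (i:ℤ) (h4 _)
    · omega
    · intro iq jq hiq hjq hc hne
      exact hS iq jq hiq hjq (by omega) (by omega) (by omega)
  have Zc0b : X (⟨n-1, by omega⟩, ⟨0, by omega⟩) = 0 := by
    apply fireN n X 1 (-1) ((n:ℤ)-1) (h3 _)
    · omega
    · intro iq jq hiq hjq hc hne
      exfalso; omega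
  have Zc0 : ∀ i : ℕ, ∀ hi : i < n, X (⟨i,hi⟩,⟨0, by omega⟩) = 0 := by
    intro i hi
    by_cases hc1 : i ≤ n-3
    · exact Zc0a i hi hc1
    by_cases hc2 : i = n-1
    · exact congrX _ _ _ _ _ _ (by omega) (by omega) hc2 rfl Zc0b
    -- i = n-2
    apply fireN n X 0 1 0 (h2 _)
    · omega
    · intro iq jq hiq hjq hc hne
      have hjq0 : jq = 0 := by omega
      by_cases hq : iq ≤ n-3
      · exact congrX _ _ _ _ _ _ (by omega) (by omega) rfl hjq0 (Zc0a iq hiq hq)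
      · exact congrX _ _ _ _ _ _ (by omega) (by omega) (by omega) hjq0 Zc0b
  have Zr0d : X (⟨0, by omega⟩, ⟨n-1, by omega⟩) = 0 := by
    apply fireN n X 1 (-1) (-((n:ℤ)-1)) (h3 _)
    · omega
    · intro iq jq hiq hjq hc hne
      exfalso; omega
  have Zr0 : ∀ j : ℕ, ∀ hj : j < n, X (⟨0, by omega⟩, ⟨j, hj⟩) = 0 := by
    intro j hj
    by_cases hc1 : j = 0
    · exact congrX _ _ _ _ _ _ (by omega) (by omega) rfl hc1 (Zc0 0 (by omega))
    by_cases hc2 : j ≤ n-3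
    · exact hS 0 j (by omega) hj (by omega) (by omega) hc2
    by_cases hc3 : j = n-1
    · exact congrX _ _ _ _ _ _ (by omega) (by omega) rfl hc3 Zr0d
    -- j = n-2
    apply fireN n X 1 0 0 (h1 _)
    · omega
    · intro iq jq hiq hjq hc hne
      have hiq0 : iq = 0 := by omega
      by_cases hq1 : jq = 0
      · exact congrX _ _ _ _ _ _ (by omega) (by omega) hiq0 hq1 (Zc0 0 (by omega))
      by_cases hq2 : jq ≤ n-3
      · exact hS iq jq hiq hjq (by omega) (by omega) hq2
      · exact congrX _ _ _ _ _ _ (by omega) (by omega) hiq0 (by omega) Zr0d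
  -- main induction
  have main : ∀ t : ℕ, t ≤ n-3 → ∀ i j : ℕ, ∀ hi : i < n, ∀ hj : j < n,
      (i ≤ t ∨ j ≤ t) → X (⟨i,hi⟩,⟨j,hj⟩) = 0 := by
    intro t
    induction t with
    | zero =>
      intro _ i j hi hj hij
      rcases hij with hij | hij
      · exact congrX _ _ _ _ _ _ (by omega) (by omega) (by omega) rfl (Zr0 j hj)
      · exact congrX _ _ _ _ _ _ (by omega) (by omega) rfl (by omega) (Zc0 i hi)
    | succ u IHu =>
      intro ht i j hi hj hij
      have IH : ∀ i j : ℕ, ∀ hi : i < n, ∀ hj : j < n, (i ≤ u ∨ j ≤ u) →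
          X (⟨i,hi⟩,⟨j,hj⟩) = 0 := IHu (by omega)
      have hD1 : X (⟨n-1, by omega⟩, ⟨u+1, by omega⟩) = 0 := by
        apply fireN n X 1 (-1) ((n:ℤ)-1-((u:ℤ)+1)) (h3 _)
        · omega
        · intro iq jq hiq hjq hc hne
          exact IH iq jq hiq hjq (Or.inr (by omega))
      have hD2 : X (⟨u+1, by omega⟩, ⟨n-1, by omega⟩) = 0 := by
        apply fireN n X 1 (-1) ((u:ℤ)+1-((n:ℤ)-1)) (h3 _)
        · omega
        · intro iq jq hiq hjq hc hne
          exact IH iq jq hiq hjq (Or.inl (by omega))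
      have hA : X (⟨n-3, by omega⟩, ⟨u+1, by omega⟩) = 0 := by
        apply fireN n X 1 1 ((n:ℤ)-3+((u:ℤ)+1)) (h4 _)
        · omega
        · intro iq jq hiq hjq hc hne
          by_cases hq1 : iq ≤ u
          · exact IH _ _ _ _ (Or.inl hq1)
          by_cases hq2 : jq ≤ u
          · exact IH _ _ _ _ (Or.inr hq2)
          · exact hS _ _ _ _ (by omega) (by omega) (by omega)
      have hR : X (⟨u+1, by omega⟩, ⟨n-2, by omega⟩) = 0 := by
        apply fireN n X 1 0 ((u:ℤ)+1) (h1 _)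
        · omega
        · intro iq jq hiq hjq hc hne
          have hiqe : iq = u+1 := by omega
          by_cases hq2 : jq ≤ u
          · exact IH _ _ _ _ (Or.inr hq2)
          by_cases hq3 : jq = n-1
          · exact congrX _ _ _ _ _ _ (by omega) (by omega) hiqe hq3 hD2
          by_cases hq4 : u+1 = n-3
          · exact congrX _ _ _ _ _ _ (by omega) (by omega) (by omega) (by omega) hA
          · exact hS _ _ _ _ (by omega) (by omega) (by omega)
      have hC : X (⟨n-2, by omega⟩, ⟨u+1, by omega⟩) = 0 := by
        apply fireN n X 0 1 ((u:ℤ)+1) (h2 _)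
        · omega
        · intro iq jq hiq hjq hc hne
          have hjqe : jq = u+1 := by omega
          by_cases hq1 : iq ≤ n-4
          · exact hS _ _ _ _ hq1 (by omega) (by omega)
          by_cases hq2 : iq = n-3
          · exact congrX _ _ _ _ _ _ (by omega) (by omega) hq2 hjqe hA
          · exact congrX _ _ _ _ _ _ (by omega) (by omega) (by omega) hjqe hD1
      by_cases q1 : i ≤ u ∨ j ≤ u
      · exact IH _ _ _ _ q1
      push_neg at q1
      rcases hij with hij | hij
      · have e : i = u+1 := by omega
        by_cases j1 : j = n-1
        · exact congrX _ _ _ _ _ _ (by omega) (by omega) e j1 hD2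
        by_cases j2 : j = n-2
        · exact congrX _ _ _ _ _ _ (by omega) (by omega) e j2 hR
        by_cases j3 : u+1 = n-3
        · exact congrX _ _ _ _ _ _ (by omega) (by omega) (by omega) (by omega) hA
        · exact hS _ _ _ _ (by omega) (by omega) (by omega)
      · have e : j = u+1 := by omega
        by_cases i1 : i = n-1
        · exact congrX _ _ _ _ _ _ (by omega) (by omega) i1 e hD1
        by_cases i2 : i = n-2
        · exact congrX _ _ _ _ _ _ (by omega) (by omega) i2 e hC
        by_cases i3 : i = n-3
        · exact congrX _ _ _ _ _ _ (by omega) (by omega) i3 e hA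
        · exact hS _ _ _ _ (by omega) (by omega) (by omega)
  have M : ∀ i j : ℕ, ∀ hi : i < n, ∀ hj : j < n, (i ≤ n-3 ∨ j ≤ n-3) →
      X (⟨i,hi⟩,⟨j,hj⟩) = 0 := main (n-3) (le_refl _)
  have hF2 : X (⟨n-2, by omega⟩, ⟨n-1, by omega⟩) = 0 := by
    apply fireN n X 1 (-1) (-1) (h3 _)
    · omega
    · intro iq jq hiq hjq hc hne
      exact M _ _ _ _ (Or.inl (by omega))
  have hF1 : X (⟨n-1, by omega⟩, ⟨n-2, by omega⟩) = 0 := by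
    apply fireN n X 1 (-1) 1 (h3 _)
    · omega
    · intro iq jq hiq hjq hc hne
      exact M _ _ _ _ (Or.inr (by omega))
  have hF3 : X (⟨n-1, by omega⟩, ⟨n-1, by omega⟩) = 0 := by
    apply fireN n X 1 1 (2*(n:ℤ)-2) (h4 _)
    · omega
    · intro iq jq hiq hjq hc hne
      exfalso; omega
  have hF4 : X (⟨n-2, by omega⟩, ⟨n-2, by omega⟩) = 0 := by
    apply fireN n X 1 0 ((n:ℤ)-2) (h1 _)
    · omega
    · intro iq jq hiq hjq hc hne
      by_cases hq : jq ≤ n-3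
      · exact M _ _ _ _ (Or.inr hq)
      · exact congrX _ _ _ _ _ _ (by omega) (by omega) (by omega) (by omega) hF2
  funext p
  obtain ⟨⟨i, hi⟩, ⟨j, hj⟩⟩ := p
  show X (⟨i, hi⟩, ⟨j, hj⟩) = 0
  by_cases hc1 : i ≤ n-3 ∨ j ≤ n-3
  · exact M _ _ _ _ hc1
  push_neg at hc1
  by_cases hc2 : i = n-2
  · by_cases hc3 : j = n-2
    · exact congrX _ _ _ _ _ _ (by omega) (by omega) hc2 hc3 hF4
    · exact congrX _ _ _ _ _ _ (by omega) (by omega) hc2 (by omega) hF2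
  · by_cases hc3 : j = n-2
    · exact congrX _ _ _ _ _ _ (by omega) (by omega) (by omega) hc3 hF1
    · exact congrX _ _ _ _ _ _ (by omega) (by omega) (by omega) (by omega) hF3

lemma X4_00 : X4 (⟨0, by omega⟩, ⟨0, by omega⟩) = 0 := by
  rw [X4, if_neg (by rw [Fin.ext_iff, Fin.ext_iff, Fin.ext_iff, Fin.ext_iff]; simp),
    if_neg (by rw [Fin.ext_iff, Fin.ext_iff, Fin.ext_iff, Fin.ext_iff]; simp)]

lemma X4_01 : X4 (⟨0, by omega⟩, ⟨1, by omega⟩) = 1 := by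
  rw [X4, if_pos (Or.inl ⟨Fin.ext (by simp), Fin.ext (by simp)⟩)]

lemma Xab_eval_zero (n a b : ℕ) (p : Fin n × Fin n)
    (h : ¬(a ≤ (p.1 : ℕ) ∧ (p.1 : ℕ) ≤ a + 3 ∧ b ≤ (p.2 : ℕ) ∧ (p.2 : ℕ) ≤ b + 3)) :
    Xab n a b p = 0 := dif_neg h

lemma Xab_eval (n a b : ℕ) (p : Fin n × Fin n) (r s : ℕ) (hr : r < 4) (hs : s < 4)
    (h1 : (p.1 : ℕ) = a + r) (h2 : (p.2 : ℕ) = b + s) :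
    Xab n a b p = X4 (⟨r, hr⟩, ⟨s, hs⟩) := by
  rw [Xab, dif_pos (by omega)]
  exact congrArg X4 (Prod.ext (Fin.ext (by show (p.1:ℕ) - a = r; omega))
    (Fin.ext (by show (p.2:ℕ) - b = s; omega)))

def emb (n : ℕ) (hn : 4 ≤ n) : Fin (n-3) × Fin (n-3) → Fin n × Fin n :=
  fun q => (⟨q.1.val, by have := q.1.isLt; omega⟩, ⟨q.2.val + 1, by have := q.2.isLt; omega⟩)

def psi (n : ℕ) : (Fin (n-3) × Fin (n-3) → ℝ) →ₗ[ℝ] (Fin n × Fin n → ℝ) where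
  toFun d := fun p => ∑ q : Fin (n-3) × Fin (n-3), d q * Xab n q.1.val q.2.val p
  map_add' x y := by
    funext p
    simp [add_mul, Finset.sum_add_distrib]
  map_smul' r x := by
    funext p
    simp [Finset.mul_sum, mul_assoc]

lemma psi_inj (n : ℕ) (hn : 4 ≤ n) (d : Fin (n-3) × Fin (n-3) → ℝ)
    (hd : ∀ q : Fin (n-3) × Fin (n-3), psi n d (emb n hn q) = 0) : d = 0 := by
  have key : ∀ A : ℕ, ∀ hA : A < n-3, ∀ B : ℕ, ∀ hB : B < n-3,
      d (⟨A, hA⟩, ⟨B, hB⟩) = 0 := by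
    intro A
    induction A using Nat.strong_induction_on with
    | _ A IH1 =>
      intro hA B
      induction B using Nat.strong_induction_on with
      | _ B IH2 =>
        intro hB
        have h0 : (∑ q : Fin (n-3) × Fin (n-3),
            d q * Xab n q.1.val q.2.val (emb n hn (⟨A, hA⟩, ⟨B, hB⟩))) = 0 := hd _
        have eP1 : ((emb n hn (⟨A, hA⟩, ⟨B, hB⟩)).1 : ℕ) = A := rfl
        have eP2 : ((emb n hn (⟨A, hA⟩, ⟨B, hB⟩)).2 : ℕ) = B + 1 := rfl
        rw [Finset.sum_eq_single (⟨A, hA⟩, ⟨B, hB⟩)] at h0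
        · rw [Xab_eval n A B _ 0 1 (by omega) (by omega) (by omega) (by omega),
            X4_01, mul_one] at h0
          exact h0
        · rintro ⟨⟨a', ha'⟩, ⟨b', hb'⟩⟩ - hne
          have hne' : ¬(a' = A ∧ b' = B) := by
            intro ⟨e1, e2⟩; subst e1; subst e2; exact hne rfl
          by_cases c1 : a' < A
          · rw [IH1 a' c1 ha' b' hb', zero_mul]
          by_cases c2 : a' = A ∧ b' < B
          · obtain ⟨e1, hlt⟩ := c2; subst e1
            rw [IH2 b' hlt hb', zero_mul]
          by_cases cw : a' = A ∧ b' = B + 1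
          · rw [Xab_eval n a' b' _ 0 0 (by omega) (by omega) (by omega) (by omega),
              X4_00, mul_zero]
          · rw [Xab_eval_zero n a' b' _ (by omega), mul_zero]
        · intro habs
          exact absurd (mem_univ _) habs
  funext q
  obtain ⟨⟨A, hA⟩, ⟨B, hB⟩⟩ := q
  exact key A hA B hB

lemma LSb_psi (n : ℕ) (d : Fin (n-3) × Fin (n-3) → ℝ) (al be c : ℤ) :
    LSb n (psi n d) al be c
    = ∑ q : Fin (n-3) × Fin (n-3), d q * LSb n (Xab n q.1.val q.2.val) al be c := by
  rw [LSb]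
  have hc : ∀ p ∈ univ.filter (fun p : Fin n × Fin n => al*(p.1:ℤ) + be*(p.2:ℤ) = c),
      psi n d p = ∑ q : Fin (n-3) × Fin (n-3), d q * Xab n q.1.val q.2.val p :=
    fun p _ => rfl
  rw [Finset.sum_congr rfl hc, Finset.sum_comm]
  apply Finset.sum_congr rfl
  intro q _
  rw [LSb, Finset.mul_sum]

lemma psi_mem (n : ℕ) (hn : 4 ≤ n) (d : Fin (n-3) × Fin (n-3) → ℝ) :
    Matrix.toLin' ((queensGraph n).adjMatrix ℝ) (psi n d) = (-4:ℝ) • psi n d := by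
  apply (eigen_iff n _).mpr
  refine ⟨fun c => ?_, fun c => ?_, fun c => ?_, fun c => ?_⟩ <;>
    (rw [LSb_psi]
     apply Finset.sum_eq_zero
     intro q _
     rw [LS_Xab n q.1.val q.2.val (by have := q.1.isLt; omega) (by have := q.2.isLt; omega)])
  · rw [LS4_row, mul_zero]
  · rw [LS4_col, mul_zero]
  · rw [LS4_diag, mul_zero]
  · rw [LS4_anti, mul_zero]

/-- the multiplicity of the eigenvalue `-4` of `Q(n)` is `(n-3)²`. -/
theorem queens_neg_four_multiplicity (n : ℕ) (h : 4 ≤ n) :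
    Module.finrank ℝ
        (Module.End.eigenspace (Matrix.toLin' ((queensGraph n).adjMatrix ℝ)) (-4)) =
      (n - 3) ^ 2 := by
  classical
  set F := (LinearMap.funLeft ℝ ℝ (emb n h)).comp
    (Module.End.eigenspace (Matrix.toLin' ((queensGraph n).adjMatrix ℝ)) (-4)).subtype with hF
  have hinj0 : ∀ x, F x = 0 → x = 0 := by
    rintro ⟨X, hX⟩ hfx
    have hmem : Matrix.toLin' ((queensGraph n).adjMatrix ℝ) X = (-4:ℝ) • X :=
      Module.End.mem_eigenspace_iff.mp hX
    obtain ⟨k1, k2, k3, k4⟩ := (eigen_iff n X).mp hmem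
    apply Subtype.ext
    apply propagation n h X k1 k2 k3 k4
    intro i j hi hj hi4 hj1 hj3
    have hz : X (emb n h (⟨i, by omega⟩, ⟨j - 1, by omega⟩)) = 0 :=
      congrFun hfx (⟨i, by omega⟩, ⟨j - 1, by omega⟩)
    rw [show (emb n h (⟨i, by omega⟩, ⟨j-1, by omega⟩) : Fin n × Fin n)
        = (⟨i, hi⟩, ⟨j, hj⟩) from Prod.ext (Fin.ext rfl)
          (Fin.ext (by show j - 1 + 1 = j; omega))] at hz
    exact hz
  have hinj : Function.Injective F := by
    intro x y hxy
    have := hinj0 (x - y) (by rw [map_sub, hxy, sub_self])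
    exact sub_eq_zero.mp this
  have hend : Function.Injective ((LinearMap.funLeft ℝ ℝ (emb n h)).comp (psi n)) := by
    intro d1 d2 hd
    have h0 : ((LinearMap.funLeft ℝ ℝ (emb n h)).comp (psi n)) (d1 - d2) = 0 := by
      rw [map_sub, hd, sub_self]
    have := psi_inj n h (d1 - d2) (fun q => congrFun h0 q)
    exact sub_eq_zero.mp this
  have hsurj : Function.Surjective F := by
    intro c
    obtain ⟨d, hd⟩ := (LinearMap.injective_iff_surjective.mp hend) c
    exact ⟨⟨psi n d, Module.End.mem_eigenspace_iff.mpr (psi_mem n h d)⟩, hd⟩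
  have e := LinearEquiv.ofBijective F ⟨hinj, hsurj⟩
  rw [e.finrank_eq, Module.finrank_pi, Fintype.card_prod, Fintype.card_fin, pow_two]
end
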